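/- Under the LARCH assumptions, the Volterra series σ_t = a + a·∑_{k=1}^∞ ∑_{j₁,...,j_k ≥ 1} b_{j₁}⋯b_{j_k} ε_{t-j₁} ⋯ ε_{t-j₁-⋯-j_k} converges in L²(Ω), and E(σ_t²) = a²·(1 + ∑_{k=1}^∞ b^k) = a²/(1-b) where b = ∑ b_j². -/

import Mathlib

open MeasureTheory ProbabilityTheory Finset Filter
set_option linter.unusedSectionVars false
set_option linter.unusedVariables false
set_option maxHeartbeats 1000000

noncomputable section VolterraAux

lemma volterraAux_integral_prod {Ω : Type*} [MeasurableSpace Ω] {μ : Measure Ω}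
    [IsProbabilityMeasure μ] {ι : Type*} {g : ι → Ω → ℝ} (hm : ∀ i, Measurable (g i))
    (hi : iIndepFun g μ)
    (hint : ∀ i, Integrable (g i) μ) (S : Finset ι) :
    Integrable (fun ω => ∏ s ∈ S, g s ω) μ ∧
      (∫ ω, ∏ s ∈ S, g s ω ∂μ) = ∏ s ∈ S, ∫ ω, g s ω ∂μ := by
  classical
  induction S using Finset.induction with
  | empty => simp
  | @insert i S hnot ih =>
    have hindep : IndepFun (∏ j ∈ S, g j) (g i) μ :=
      hi.indepFun_finsetProd_of_notMem hm hnot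
    have hps : (fun ω => ∏ s ∈ S, g s ω) = ∏ j ∈ S, g j := by
      funext ω; simp
    have hint' : Integrable (∏ j ∈ S, g j) μ := hps ▸ ih.1
    have hmul : Integrable ((∏ j ∈ S, g j) * g i) μ :=
      hindep.integrable_mul hint' (hint i)
    constructor
    · have : (fun ω => ∏ s ∈ insert i S, g s ω) = (∏ j ∈ S, g j) * g i := by
        funext ω; rw [Finset.prod_insert hnot]; simp [mul_comm]
      rw [this]; exact hmul
    · have h1 : (∫ ω, ∏ s ∈ insert i S, g s ω ∂μ)
          = ∫ ω, ((∏ j ∈ S, g j) * g i) ω ∂μ := by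
        congr 1; funext ω; rw [Finset.prod_insert hnot]; simp [mul_comm]
      rw [h1, hindep.integral_mul_eq_mul_integral hint'.aestronglyMeasurable (hint i).aestronglyMeasurable,
        Finset.prod_insert hnot, ← hps, ih.2]
      ring

lemma volterraAux_ortho {Ω : Type*} [MeasurableSpace Ω] {μ : Measure Ω}
    [IsProbabilityMeasure μ] {ε : ℤ → Ω → ℝ}
    (hmeas : ∀ i, Measurable (ε i))
    (hindep : iIndepFun ε μ)
    (hL2 : ∀ i, MemLp (ε i) 2 μ)
    (hmean : ∀ i, μ[ε i] = 0)
    (hvar : ∀ i, μ[fun ω => (ε i ω) ^ 2] = 1)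
    (S S' : Finset ℤ) :
    Integrable (fun ω => (∏ s ∈ S, ε s ω) * (∏ s ∈ S', ε s ω)) μ ∧
      (∫ ω, (∏ s ∈ S, ε s ω) * (∏ s ∈ S', ε s ω) ∂μ) = if S = S' then 1 else 0 := by
  classical
  set φ : ℤ → ℝ → ℝ := fun s x => if s ∈ S ∩ S' then x ^ 2 else x with hφ
  set h : ℤ → Ω → ℝ := fun s => φ s ∘ ε s with hh
  have hφm : ∀ s, Measurable (φ s) := by
    intro s; by_cases hs : s ∈ S ∩ S'
    · simp only [hφ, hs, if_true]; exact measurable_id.pow_const 2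
    · simp only [hφ, hs, if_false]; exact measurable_id
  have hhm : ∀ s, Measurable (h s) := fun s => (hφm s).comp (hmeas s)
  have hiid : iIndepFun h μ := hindep.comp φ hφm
  have hhint : ∀ s, Integrable (h s) μ := by
    intro s; by_cases hs : s ∈ S ∩ S'
    · have : h s = fun ω => (ε s ω) ^ 2 := by
        funext ω; simp only [hh, hφ, Function.comp_apply]; rw [if_pos hs]
      rw [this]; exact (hL2 s).integrable_sq
    · have : h s = ε s := by
        funext ω; simp only [hh, hφ, Function.comp_apply]; rw [if_neg hs]
      rw [this]; exact (hL2 s).integrable (by norm_num)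
  have hhval : ∀ s, (∫ ω, h s ω ∂μ) = if s ∈ S ∩ S' then 1 else 0 := by
    intro s; by_cases hs : s ∈ S ∩ S'
    · have : h s = fun ω => (ε s ω) ^ 2 := by
        funext ω; simp only [hh, hφ, Function.comp_apply]; rw [if_pos hs]
      rw [this]; simp [hs, hvar s]
    · have : h s = ε s := by
        funext ω; simp only [hh, hφ, Function.comp_apply]; rw [if_neg hs]
      rw [this]; simp [hs, hmean s]
  -- pointwise identity
  have hpt : ∀ ω, (∏ s ∈ S, ε s ω) * (∏ s ∈ S', ε s ω) = ∏ s ∈ S ∪ S', h s ω := by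
    intro ω
    have hsub : S ∩ S' ⊆ S ∪ S' := (Finset.inter_subset_left).trans Finset.subset_union_left
    have hsd : (S ∪ S') \ (S ∩ S') = (S \ S') ∪ (S' \ S) := by
      ext x; simp only [Finset.mem_sdiff, Finset.mem_union, Finset.mem_inter]; tauto
    have hdisj : Disjoint (S \ S') (S' \ S) := by
      rw [Finset.disjoint_left]; intro x hx hx'
      simp only [Finset.mem_sdiff] at hx hx'; exact hx.2 hx'.1
    have e0 : ∏ s ∈ S ∪ S', h s ω
        = (∏ s ∈ (S ∪ S') \ (S ∩ S'), h s ω) * ∏ s ∈ S ∩ S', h s ω :=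
      (Finset.prod_sdiff hsub).symm
    have e1 : ∏ s ∈ S ∩ S', h s ω = ∏ s ∈ S ∩ S', (ε s ω) ^ 2 :=
      Finset.prod_congr rfl fun s hs => by
        simp only [hh, hφ, Function.comp_apply]; rw [if_pos hs]
    have e2 : ∏ s ∈ (S ∪ S') \ (S ∩ S'), h s ω
        = (∏ s ∈ S \ S', ε s ω) * ∏ s ∈ S' \ S, ε s ω := by
      rw [hsd, Finset.prod_union hdisj]
      congr 1 <;> refine Finset.prod_congr rfl fun s hs => ?_ <;>
        simp only [Finset.mem_sdiff] at hs <;>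
        simp only [hh, hφ, Function.comp_apply] <;>
        rw [if_neg (by simp only [Finset.mem_inter]; tauto)]
    have e3 : (∏ s ∈ S, ε s ω) = (∏ s ∈ S ∩ S', ε s ω) * ∏ s ∈ S \ S', ε s ω :=
      (Finset.prod_inter_mul_prod_diff S S' _).symm
    have e4 : (∏ s ∈ S', ε s ω) = (∏ s ∈ S ∩ S', ε s ω) * ∏ s ∈ S' \ S, ε s ω := by
      rw [Finset.inter_comm]
      exact (Finset.prod_inter_mul_prod_diff S' S _).symm
    rw [e0, e1, e2, e3, e4, Finset.prod_pow]
    ring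
  have hfun : (fun ω => (∏ s ∈ S, ε s ω) * (∏ s ∈ S', ε s ω))
      = fun ω => ∏ s ∈ S ∪ S', h s ω := funext hpt
  obtain ⟨hint, hval⟩ := volterraAux_integral_prod hhm hiid hhint (S ∪ S')
  refine ⟨hfun ▸ hint, ?_⟩
  rw [hfun, hval]
  by_cases hSS : S = S'
  · subst hSS
    simp only [Finset.union_self, Finset.inter_self, if_true]
    calc ∏ s ∈ S, ∫ ω, h s ω ∂μ = ∏ s ∈ S, (1:ℝ) :=
          Finset.prod_congr rfl fun s hs =>
            (hhval s).trans (if_pos (by rwa [Finset.inter_self]))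
      _ = 1 := Finset.prod_const_one
  · simp only [hSS, if_false]
    have : ∃ x ∈ S ∪ S', x ∉ S ∩ S' := by
      by_contra hcon
      push_neg at hcon
      apply hSS
      apply Finset.Subset.antisymm
      · intro x hx
        exact Finset.mem_of_mem_inter_right (hcon x (Finset.mem_union_left _ hx))
      · intro x hx
        exact Finset.mem_of_mem_inter_left (hcon x (Finset.mem_union_right _ hx))
    obtain ⟨x, hxu, hxn⟩ := this
    exact Finset.prod_eq_zero hxu (by rw [hhval x]; simp [hxn])

def volterraPsum {k : ℕ} (p : Fin k → ℕ) (l : Fin k) : ℤ :=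
  ∑ i ∈ Finset.univ.filter (fun i : Fin k => i ≤ l), ((p i : ℤ) + 1)

lemma volterraPsum_strictMono {k : ℕ} (p : Fin k → ℕ) : StrictMono (volterraPsum p) := by
  intro l l' hll
  apply Finset.sum_lt_sum_of_subset (i := l')
  · intro i hi
    simp only [Finset.mem_filter, Finset.mem_univ, true_and] at hi ⊢
    exact hi.trans hll.le
  · simp
  · simp [hll.not_ge]
  · positivity
  · intro j _ _; positivity

def volterraTset (t : ℤ) {k : ℕ} (p : Fin k → ℕ) : Finset ℤ :=
  Finset.image (fun l => t - volterraPsum p l) Finset.univ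

lemma volterraTset_inj' (t : ℤ) {k : ℕ} (p : Fin k → ℕ) :
    Function.Injective (fun l => t - volterraPsum p l) := by
  have : StrictAnti (fun l => t - volterraPsum p l) := by
    intro l l' h; exact sub_lt_sub_left (volterraPsum_strictMono p h) t
  exact this.injective

lemma volterraTset_card (t : ℤ) {k : ℕ} (p : Fin k → ℕ) :
    (volterraTset t p).card = k := by
  rw [volterraTset, Finset.card_image_of_injective _ (volterraTset_inj' t p)]
  simp

lemma volterraTset_eq_card {t : ℤ} {k k' : ℕ} {p : Fin k → ℕ} {p' : Fin k' → ℕ}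
    (h : volterraTset t p = volterraTset t p') : k = k' := by
  rw [← volterraTset_card t p, ← volterraTset_card t p', h]

lemma volterraTset_eq_same {t : ℤ} {k : ℕ} {p p' : Fin k → ℕ}
    (h : volterraTset t p = volterraTset t p') : p = p' := by
  classical
  -- first: image of psums equal
  have himg : Finset.image (volterraPsum p) Finset.univ
      = Finset.image (volterraPsum p') Finset.univ := by
    have hinj : Function.Injective (fun x : ℤ => t - x) := by
      intro x y hxy; simp only at hxy; omega
    apply Finset.image_injective hinj
    have e : ∀ q : Fin k → ℕ, Finset.image (fun x : ℤ => t - x)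
        (Finset.image (volterraPsum q) Finset.univ) = volterraTset t q := by
      intro q; rw [Finset.image_image]; rfl
    rw [e, e]; exact h
  -- both psums are strict mono with the same image, hence equal
  have hcard : (Finset.image (volterraPsum p) Finset.univ).card = k := by
    rw [Finset.card_image_of_injective _ (volterraPsum_strictMono p).injective]; simp
  have h1 : volterraPsum p = (Finset.image (volterraPsum p) Finset.univ).orderEmbOfFin hcard :=
    Finset.orderEmbOfFin_unique hcard (fun x => Finset.mem_image_of_mem _ (Finset.mem_univ x))
      (volterraPsum_strictMono p)
  have h2 : volterraPsum p' = (Finset.image (volterraPsum p) Finset.univ).orderEmbOfFin hcard :=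
    Finset.orderEmbOfFin_unique hcard
      (fun x => himg ▸ Finset.mem_image_of_mem _ (Finset.mem_univ x))
      (volterraPsum_strictMono p')
  have hps : volterraPsum p = volterraPsum p' := h1.trans h2.symm
  -- recover p from psums by strong induction on the index
  have key : ∀ n : ℕ, ∀ i : Fin k, (i : ℕ) = n → p i = p' i := by
    intro n
    induction n using Nat.strong_induction_on with
    | _ n ihn =>
    intro i hin
    have ih : ∀ i' : Fin k, i' < i → p i' = p' i' := by
      intro i' hi'
      exact ihn (i' : ℕ) (by have := Fin.lt_def.mp hi'; omega) i' rfl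
    have hsplit : ∀ q : Fin k → ℕ, volterraPsum q i
        = ((q i : ℤ) + 1) + ∑ i' ∈ Finset.univ.filter (fun i' : Fin k => i' < i), ((q i' : ℤ) + 1) := by
      intro q
      rw [volterraPsum]
      have : Finset.univ.filter (fun i' : Fin k => i' ≤ i)
          = insert i (Finset.univ.filter (fun i' : Fin k => i' < i)) := by
        ext x
        simp only [Finset.mem_filter, Finset.mem_univ, true_and, Finset.mem_insert]
        constructor
        · intro hx; rcases lt_or_eq_of_le hx with h' | h'
          · exact Or.inr h'
          · exact Or.inl h'
        · rintro (rfl | hx); · exact le_refl _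
          · exact hx.le
      rw [this, Finset.sum_insert (by simp)]
    have htail : ∑ i' ∈ Finset.univ.filter (fun i' : Fin k => i' < i), ((p i' : ℤ) + 1)
        = ∑ i' ∈ Finset.univ.filter (fun i' : Fin k => i' < i), ((p' i' : ℤ) + 1) := by
      apply Finset.sum_congr rfl
      intro i' hi'
      simp only [Finset.mem_filter, Finset.mem_univ, true_and] at hi'
      rw [ih i' hi']
    have := congrFun hps i
    rw [hsplit p, hsplit p', htail] at this
    have : (p i : ℤ) = (p' i : ℤ) := by omega
    exact_mod_cast this
  funext i
  exact key (i : ℕ) i rfl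

lemma volterraAux_tendsto (bj : ℕ → ℝ) (hsum : Summable fun j => bj j ^ 2)
    (b : ℝ) (hb : b = ∑' j : ℕ, bj j ^ 2) (hb1 : b < 1) :
    Tendsto (fun N : ℕ => 1 + ∑ k ∈ Finset.Icc 1 N, (∑ x ∈ Finset.range N, bj x ^ 2) ^ k)
      atTop (nhds (1 / (1 - b))) := by
  set B : ℕ → ℝ := fun N => ∑ x ∈ Finset.range N, bj x ^ 2 with hB
  set u : ℕ → ℝ := fun N => ∑ k ∈ Finset.Icc 1 N, B N ^ k with hu
  have hbnn : 0 ≤ b := hb ▸ tsum_nonneg (fun j => sq_nonneg _)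
  have hBnn : ∀ N, 0 ≤ B N := fun N => Finset.sum_nonneg fun x _ => sq_nonneg _
  have hBle : ∀ N, B N ≤ b := fun N => hb ▸ Summable.sum_le_tsum _ (fun x _ => sq_nonneg _) hsum
  have hBmono : Monotone B := fun N M h =>
    Finset.sum_le_sum_of_subset_of_nonneg (Finset.range_subset_range.2 h) fun x _ _ => sq_nonneg _
  have hBtend : Tendsto B atTop (nhds b) := hb ▸ hsum.hasSum.tendsto_sum_nat
  have humono : Monotone u := by
    intro N M h
    calc u N ≤ ∑ k ∈ Finset.Icc 1 N, B M ^ k :=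
          Finset.sum_le_sum fun k _ => pow_le_pow_left₀ (hBnn N) (hBmono h) k
      _ ≤ u M := Finset.sum_le_sum_of_subset_of_nonneg
          (Finset.Icc_subset_Icc_right h) fun k _ _ => pow_nonneg (hBnn M) k
  have hsumgeo : Summable (fun k : ℕ => b ^ (k + 1)) := by
    simpa [pow_succ'] using (summable_geometric_of_lt_one hbnn hb1).mul_left b
  have htsumgeo : ∑' k : ℕ, b ^ (k + 1) = b * (1 - b)⁻¹ := by
    calc ∑' k : ℕ, b ^ (k + 1) = ∑' k : ℕ, b * b ^ k := by
          congr 1; funext k; rw [pow_succ']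
      _ = b * ∑' k : ℕ, b ^ k := tsum_mul_left
      _ = b * (1 - b)⁻¹ := by rw [tsum_geometric_of_lt_one hbnn hb1]
  have hIcc : ∀ (N : ℕ) (c : ℝ), ∑ k ∈ Finset.Icc 1 N, c ^ k = ∑ k ∈ Finset.range N, c ^ (k + 1) := by
    intro N c
    induction N with
    | zero => simp
    | succ n ih =>
      rw [Finset.sum_Icc_succ_top (Nat.one_le_iff_ne_zero.2 (Nat.succ_ne_zero n)),
        Finset.sum_range_succ, ih]
  have hub : ∀ N, u N ≤ b * (1 - b)⁻¹ := by
    intro N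
    calc u N ≤ ∑ k ∈ Finset.Icc 1 N, b ^ k :=
          Finset.sum_le_sum fun k _ => pow_le_pow_left₀ (hBnn N) (hBle N) k
      _ = ∑ k ∈ Finset.range N, b ^ (k + 1) := hIcc N b
      _ ≤ ∑' k : ℕ, b ^ (k + 1) := Summable.sum_le_tsum _ (fun k _ => pow_nonneg hbnn _) hsumgeo
      _ = b * (1 - b)⁻¹ := htsumgeo
  have hbdd : BddAbove (Set.range u) := ⟨b * (1 - b)⁻¹, by rintro x ⟨N, rfl⟩; exact hub N⟩
  have hutend : Tendsto u atTop (nhds (⨆ N, u N)) := tendsto_atTop_ciSup humono hbdd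
  have hle1 : (⨆ N, u N) ≤ b * (1 - b)⁻¹ := ciSup_le hub
  have hle2 : b * (1 - b)⁻¹ ≤ ⨆ N, u N := by
    have hK : ∀ K : ℕ, ∑ k ∈ Finset.Icc 1 K, b ^ k ≤ ⨆ N, u N := by
      intro K
      have h1 : Tendsto (fun N => ∑ k ∈ Finset.Icc 1 K, B N ^ k) atTop
          (nhds (∑ k ∈ Finset.Icc 1 K, b ^ k)) :=
        tendsto_finset_sum _ fun k _ => hBtend.pow k
      apply le_of_tendsto h1
      filter_upwards [eventually_ge_atTop K] with N hN
      calc ∑ k ∈ Finset.Icc 1 K, B N ^ k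
          ≤ ∑ k ∈ Finset.Icc 1 N, B N ^ k := Finset.sum_le_sum_of_subset_of_nonneg
            (Finset.Icc_subset_Icc_right hN) fun k _ _ => pow_nonneg (hBnn N) k
        _ ≤ ⨆ N, u N := le_ciSup hbdd N
    have h2 : Tendsto (fun K : ℕ => ∑ k ∈ Finset.Icc 1 K, b ^ k) atTop
        (nhds (b * (1 - b)⁻¹)) := by
      have := hsumgeo.hasSum.tendsto_sum_nat
      rw [htsumgeo] at this
      refine this.congr fun K => (hIcc K b).symm
    exact le_of_tendsto h2 (Filter.Eventually.of_forall hK)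
  have hfin : (⨆ N, u N) = b * (1 - b)⁻¹ := le_antisymm hle1 hle2
  rw [hfin] at hutend
  have : (1 : ℝ) / (1 - b) = 1 + b * (1 - b)⁻¹ := by
    have h1b : (1 : ℝ) - b ≠ 0 := by linarith
    field_simp
    ring
  rw [this]
  exact (tendsto_const_nhds.add hutend)

/-- the truncated Volterra sum without the constant and the factor `a`. -/
def volterraA {Ω : Type*} (ε : ℤ → Ω → ℝ) (bj : ℕ → ℝ) (t : ℤ) (N : ℕ) : Ω → ℝ := fun ω =>
  ∑ k ∈ Finset.Icc 1 N, ∑ p ∈ Fintype.piFinset (fun _ : Fin k => Finset.range N),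
    (∏ i, bj (p i)) * ∏ s ∈ volterraTset t p, ε s ω

section Main
variable {Ω : Type*} [MeasurableSpace Ω] {μ : Measure Ω} [IsProbabilityMeasure μ]
  {ε : ℤ → Ω → ℝ} (hmeas : ∀ i, Measurable (ε i))
  (hindep : iIndepFun ε μ)
  (hL2 : ∀ i, MemLp (ε i) 2 μ) (hmean : ∀ i, μ[ε i] = 0)
  (hvar : ∀ i, μ[fun ω => (ε i ω) ^ 2] = 1)

include hmeas hindep hL2 hmean hvar

lemma volterraX_memLp (S : Finset ℤ) : MemLp (fun ω => ∏ s ∈ S, ε s ω) 2 μ := by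
  have hm : Measurable fun ω => ∏ s ∈ S, ε s ω :=
    Finset.measurable_prod S fun s _ => hmeas s
  rw [memLp_two_iff_integrable_sq hm.aestronglyMeasurable]
  have h := (volterraAux_ortho hmeas hindep hL2 hmean hvar S S).1
  have e : (fun ω => (∏ s ∈ S, ε s ω) ^ 2)
      = fun ω => (∏ s ∈ S, ε s ω) * (∏ s ∈ S, ε s ω) := by funext ω; ring
  rw [e]; exact h

lemma volterraX_integrable (S : Finset ℤ) : Integrable (fun ω => ∏ s ∈ S, ε s ω) μ :=
  (volterraX_memLp hmeas hindep hL2 hmean hvar S).integrable one_le_two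

lemma volterraX_mean_zero {k : ℕ} (hk : 1 ≤ k) (t : ℤ) (p : Fin k → ℕ) :
    (∫ ω, ∏ s ∈ volterraTset t p, ε s ω ∂μ) = 0 := by
  have h := (volterraAux_integral_prod (g := ε) hmeas hindep
    (fun i => (hL2 i).integrable one_le_two) (volterraTset t p)).2
  rw [h]
  have hne : (volterraTset t p).Nonempty := by
    rw [← Finset.card_pos, volterraTset_card]; omega
  obtain ⟨s, hs⟩ := hne
  exact Finset.prod_eq_zero hs (hmean s)

lemma volterraA_integrable (bj : ℕ → ℝ) (t : ℤ) (N : ℕ) :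
    Integrable (volterraA ε bj t N) μ := by
  apply integrable_finset_sum
  intro k _
  apply integrable_finset_sum
  intro p _
  exact (volterraX_integrable hmeas hindep hL2 hmean hvar _).const_mul _

lemma volterraA_integral_zero (bj : ℕ → ℝ) (t : ℤ) (N : ℕ) :
    (∫ ω, volterraA ε bj t N ω ∂μ) = 0 := by
  simp only [volterraA]
  rw [integral_finset_sum _ (fun k _ => integrable_finset_sum _
    (fun p _ => (volterraX_integrable hmeas hindep hL2 hmean hvar _).const_mul _))]
  apply Finset.sum_eq_zero
  intro k hk
  rw [integral_finset_sum _
    (fun p _ => (volterraX_integrable hmeas hindep hL2 hmean hvar _).const_mul _)]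
  apply Finset.sum_eq_zero
  intro p _
  rw [MeasureTheory.integral_const_mul, volterraX_mean_zero hmeas hindep hL2 hmean hvar
    (Finset.mem_Icc.1 hk).1 t p, mul_zero]


end Main

def volterraIdx (N : ℕ) : Finset (Σ k : ℕ, Fin k → ℕ) :=
  (Finset.Icc 1 N).sigma (fun k => Fintype.piFinset fun _ : Fin k => Finset.range N)

lemma volterraTset_sigma_inj (t : ℤ) (x y : Σ k : ℕ, Fin k → ℕ)
    (h : volterraTset t x.2 = volterraTset t y.2) : x = y := by
  obtain ⟨kx, px⟩ := x
  obtain ⟨ky, py⟩ := y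
  obtain rfl : kx = ky := volterraTset_eq_card h
  obtain rfl : px = py := volterraTset_eq_same h
  rfl

lemma volterraIdx_inter (N M : ℕ) :
    volterraIdx N ∩ volterraIdx M = volterraIdx (min N M) := by
  ext ⟨k, p⟩
  simp only [volterraIdx, Finset.mem_inter, Finset.mem_sigma, Finset.mem_Icc,
    Fintype.mem_piFinset, Finset.mem_range, lt_min_iff, le_min_iff, forall_and]
  tauto

lemma volterraA_sigma {Ω : Type*} (ε : ℤ → Ω → ℝ) (bj : ℕ → ℝ) (t : ℤ) (N : ℕ) (ω : Ω) :
    volterraA ε bj t N ω = ∑ x ∈ volterraIdx N,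
      (∏ i, bj (x.2 i)) * ∏ s ∈ volterraTset t x.2, ε s ω :=
  Finset.sum_sigma' _ _ _

section Main2
variable {Ω : Type*} [MeasurableSpace Ω] {μ : Measure Ω} [IsProbabilityMeasure μ]
  {ε : ℤ → Ω → ℝ} (hmeas : ∀ i, Measurable (ε i))
  (hindep : iIndepFun ε μ)
  (hL2 : ∀ i, MemLp (ε i) 2 μ) (hmean : ∀ i, μ[ε i] = 0)
  (hvar : ∀ i, μ[fun ω => (ε i ω) ^ 2] = 1)

include hmeas hindep hL2 hmean hvar

lemma volterraA_mul_expand (bj : ℕ → ℝ) (t : ℤ) (N M : ℕ) :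
    (fun ω => volterraA ε bj t N ω * volterraA ε bj t M ω)
      = fun ω => ∑ x ∈ volterraIdx N, ∑ y ∈ volterraIdx M,
        ((∏ i, bj (x.2 i)) * (∏ i, bj (y.2 i))) *
          ((∏ s ∈ volterraTset t x.2, ε s ω) * (∏ s ∈ volterraTset t y.2, ε s ω)) := by
  funext ω
  rw [volterraA_sigma, volterraA_sigma, Finset.sum_mul_sum]
  refine Finset.sum_congr rfl fun x _ => Finset.sum_congr rfl fun y _ => ?_
  ring

lemma volterraA_mul_integrable (bj : ℕ → ℝ) (t : ℤ) (N M : ℕ) :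
    Integrable (fun ω => volterraA ε bj t N ω * volterraA ε bj t M ω) μ := by
  rw [volterraA_mul_expand hmeas hindep hL2 hmean hvar]
  apply integrable_finset_sum
  intro x _
  apply integrable_finset_sum
  intro y _
  exact ((volterraAux_ortho hmeas hindep hL2 hmean hvar _ _).1).const_mul _

lemma volterraA_mul_integral (bj : ℕ → ℝ) (t : ℤ) (N M : ℕ) :
    (∫ ω, volterraA ε bj t N ω * volterraA ε bj t M ω ∂μ)
      = ∑ k ∈ Finset.Icc 1 (min N M), (∑ x ∈ Finset.range (min N M), bj x ^ 2) ^ k := by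
  classical
  rw [volterraA_mul_expand hmeas hindep hL2 hmean hvar]
  rw [integral_finset_sum _ (fun x _ => integrable_finset_sum _ (fun y _ =>
    ((volterraAux_ortho hmeas hindep hL2 hmean hvar _ _).1).const_mul _))]
  have step1 : ∀ x ∈ volterraIdx N,
      (∫ ω, ∑ y ∈ volterraIdx M, ((∏ i, bj (x.2 i)) * (∏ i, bj (y.2 i))) *
        ((∏ s ∈ volterraTset t x.2, ε s ω) * (∏ s ∈ volterraTset t y.2, ε s ω)) ∂μ)
      = if x ∈ volterraIdx M then (∏ i, bj (x.2 i)) * (∏ i, bj (x.2 i)) else 0 := by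
    intro x _
    rw [integral_finset_sum _ (fun y _ =>
      ((volterraAux_ortho hmeas hindep hL2 hmean hvar _ _).1).const_mul _)]
    have hterm : ∀ y ∈ volterraIdx M,
        (∫ ω, ((∏ i, bj (x.2 i)) * (∏ i, bj (y.2 i))) *
          ((∏ s ∈ volterraTset t x.2, ε s ω) * (∏ s ∈ volterraTset t y.2, ε s ω)) ∂μ)
        = if y = x then (∏ i, bj (x.2 i)) * (∏ i, bj (x.2 i)) else 0 := by
      intro y _
      rw [MeasureTheory.integral_const_mul,
        (volterraAux_ortho hmeas hindep hL2 hmean hvar _ _).2]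
      by_cases hxy : y = x
      · subst hxy; simp
      · have hne : volterraTset t x.2 ≠ volterraTset t y.2 := fun hEq =>
          hxy (volterraTset_sigma_inj t y x hEq.symm)
        rw [if_neg hne, if_neg hxy, mul_zero]
    rw [Finset.sum_congr rfl hterm, Finset.sum_ite_eq' (volterraIdx M) x]
  rw [Finset.sum_congr rfl step1, Finset.sum_ite_mem, volterraIdx_inter]
  -- now compute the sum of squared coefficients
  simp only [volterraIdx]
  rw [← Finset.sum_sigma' (Finset.Icc 1 (min N M))
    (fun k => Fintype.piFinset fun _ : Fin k => Finset.range (min N M))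
    (fun k p => (∏ i, bj (p i)) * (∏ i, bj (p i)))]
  apply Finset.sum_congr rfl
  intro k _
  have e1 : ∀ p : Fin k → ℕ, (∏ i, bj (p i)) * (∏ i, bj (p i)) = ∏ i, bj (p i) ^ 2 := by
    intro p; rw [← Finset.prod_mul_distrib]; congr 1; funext i; ring
  rw [Finset.sum_congr rfl fun p _ => e1 p]
  rw [← Finset.prod_univ_sum (fun _ : Fin k => Finset.range (min N M)) (fun _ x => bj x ^ 2)]
  rw [Finset.prod_const, Finset.card_univ, Fintype.card_fin]

end Main2

end VolterraAux

/-- Under the LARCH assumptions (i.i.d. noise with mean 0 and variance 1, `a ≠ 0`,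
`b = ∑ b_j² < 1`), the Volterra series
`σ_t = a + a ∑_{k≥1} ∑_{j₁,…,j_k ≥ 1} b_{j₁}⋯b_{j_k} ε_{t-j₁}⋯ε_{t-j₁-⋯-j_k}`
converges in `L²(Ω)` (as the limit of its truncations), and `E(σ_t²) = a²/(1-b)`.
Here `bj j` denotes `b_{j+1}`; the truncation `T N` sums over `k ≤ N` and
`j₁,…,j_k ≤ N`. -/
theorem volterra_L2_convergence
    {Ω : Type*} [MeasurableSpace Ω] (μ : Measure Ω) [IsProbabilityMeasure μ]
    (ε : ℤ → Ω → ℝ)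
    (hmeas : ∀ i, Measurable (ε i))
    (hindep : iIndepFun ε μ)
    (hident : ∀ i j : ℤ, Measure.map (ε i) μ = Measure.map (ε j) μ)
    (hL2 : ∀ i, MemLp (ε i) 2 μ)
    (hmean : ∀ i, μ[ε i] = 0)
    (hvar : ∀ i, μ[fun ω => (ε i ω) ^ 2] = 1)
    (a : ℝ) (ha : a ≠ 0)
    (bj : ℕ → ℝ) (hsum : Summable (fun j => (bj j) ^ 2))
    (b : ℝ) (hb : b = ∑' j : ℕ, (bj j) ^ 2) (hb1 : b < 1)
    (t : ℤ)
    (T : ℕ → Ω → ℝ)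
    (hT : ∀ N : ℕ, ∀ ω : Ω, T N ω =
      a + a * ∑ k ∈ Finset.Icc 1 N, ∑ j : Fin k → Fin N,
        (∏ i, bj (j i)) *
          ∏ l : Fin k, ε (t - ∑ i ∈ Finset.univ.filter (fun i : Fin k => i ≤ l),
            ((j i : ℕ) + 1 : ℤ)) ω) :
    ∃ σt : Ω → ℝ, MemLp σt 2 μ ∧
      Filter.Tendsto (fun N => eLpNorm (fun ω => T N ω - σt ω) 2 μ)
        Filter.atTop (nhds 0) ∧
      μ[fun ω => (σt ω) ^ 2] = a ^ 2 / (1 - b) := by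
  classical
  -- rewrite T in canonical form
  have hTA : ∀ N, T N = fun ω => a + a * volterraA ε bj t N ω := by
    intro N
    funext ω
    rw [hT N ω]
    congr 1
    congr 1
    simp only [volterraA]
    refine Finset.sum_congr rfl fun k hk => ?_
    refine Finset.sum_bij' (fun (j : Fin k → Fin N) (_ : j ∈ Finset.univ) => fun i => (j i : ℕ))
      (fun p hp => fun i => (⟨p i, ?_⟩ : Fin N)) ?_ ?_ ?_ ?_ ?_
    · exact Finset.mem_range.1 ((Fintype.mem_piFinset.1 hp) i)
    · intro j _
      simp only [Fintype.mem_piFinset, Finset.mem_range]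
      exact fun i => (j i).isLt
    · intro p hp; exact Finset.mem_univ _
    · intro j _; funext i; exact Fin.ext rfl
    · intro p hp; funext i; rfl
    · intro j _
      congr 1
      rw [volterraTset, Finset.prod_image (fun x _ y _ h => volterraTset_inj' t _ h)]
      refine Finset.prod_congr rfl fun l _ => ?_
      congr 1
  -- membership in L²
  have hAmem : ∀ N, MemLp (volterraA ε bj t N) 2 μ := by
    intro N
    have : volterraA ε bj t N = fun ω =>
        ∑ k ∈ Finset.Icc 1 N, ∑ p ∈ Fintype.piFinset (fun _ : Fin k => Finset.range N),
          (∏ i, bj (p i)) * ∏ s ∈ volterraTset t p, ε s ω := rfl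
    rw [this]
    apply memLp_finset_sum
    intro k _
    apply memLp_finset_sum
    intro p _
    exact (volterraX_memLp hmeas hindep hL2 hmean hvar _).const_mul _
  have hTmem : ∀ N, MemLp (T N) 2 μ := by
    intro N
    rw [hTA N]
    exact (memLp_const a).add ((hAmem N).const_mul a)
  -- the second-moment formula
  set G : ℕ → ℝ := fun K =>
    a ^ 2 * (1 + ∑ k ∈ Finset.Icc 1 K, (∑ x ∈ Finset.range K, bj x ^ 2) ^ k) with hG
  have hTT : ∀ N M, (∫ ω, T N ω * T M ω ∂μ) = G (min N M) := by
    intro N M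
    have hexp : (fun ω => T N ω * T M ω) = fun ω =>
        a ^ 2 + (a ^ 2 * volterraA ε bj t N ω + (a ^ 2 * volterraA ε bj t M ω
          + a ^ 2 * (volterraA ε bj t N ω * volterraA ε bj t M ω))) := by
      funext ω
      rw [hTA N, hTA M]
      ring
    rw [hexp]
    have IN := volterraA_integrable hmeas hindep hL2 hmean hvar bj t N
    have IM := volterraA_integrable hmeas hindep hL2 hmean hvar bj t M
    have INM := volterraA_mul_integrable hmeas hindep hL2 hmean hvar bj t N M
    have I4 : Integrable (fun ω =>
        a ^ 2 * (volterraA ε bj t N ω * volterraA ε bj t M ω)) μ := INM.const_mul _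
    have I3 : Integrable (fun ω => a ^ 2 * volterraA ε bj t M ω
        + a ^ 2 * (volterraA ε bj t N ω * volterraA ε bj t M ω)) μ :=
      (IM.const_mul _).add I4
    have I2 : Integrable (fun ω => a ^ 2 * volterraA ε bj t N ω
        + (a ^ 2 * volterraA ε bj t M ω
          + a ^ 2 * (volterraA ε bj t N ω * volterraA ε bj t M ω))) μ :=
      (IN.const_mul _).add I3
    rw [integral_add (integrable_const _) I2]
    rw [integral_add (IN.const_mul _) I3]
    rw [integral_add (IM.const_mul _) I4]
    rw [MeasureTheory.integral_const_mul, MeasureTheory.integral_const_mul,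
      MeasureTheory.integral_const_mul,
      volterraA_integral_zero hmeas hindep hL2 hmean hvar bj t N,
      volterraA_integral_zero hmeas hindep hL2 hmean hvar bj t M,
      volterraA_mul_integral hmeas hindep hL2 hmean hvar bj t N M]
    simp only [integral_const, measure_univ, ENNReal.toReal_one, one_smul, hG, probReal_univ]
    ring
  -- move to Lp space
  set f : ℕ → Lp ℝ 2 μ := fun N => (hTmem N).toLp (T N) with hf
  have hfae : ∀ N, ⇑(f N) =ᵐ[μ] T N := by
    intro N; rw [hf]; exact (hTmem N).coeFn_toLp
  have hinner : ∀ N M, (inner ℝ (f N) (f M) : ℝ) = G (min N M) := by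
    intro N M
    rw [MeasureTheory.L2.inner_def]
    have : ∀ᵐ ω ∂μ, (inner ℝ ((f N) ω) ((f M) ω) : ℝ) = T N ω * T M ω := by
      filter_upwards [hfae N, hfae M] with ω h1 h2
      rw [RCLike.inner_apply', conj_trivial, h1, h2]
    rw [integral_congr_ae this, hTT N M]
  have hnormsq : ∀ N, ‖f N‖ ^ 2 = G N := by
    intro N
    have h := hinner N N
    rw [min_self] at h
    rw [← h, real_inner_self_eq_norm_sq]
  have hsub : ∀ N M, N ≤ M → ‖f M - f N‖ ^ 2 = G M - G N := by
    intro N M h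
    rw [norm_sub_sq_real, hnormsq, hnormsq, hinner M N, min_eq_right h]
    ring
  have hGtend : Filter.Tendsto G Filter.atTop (nhds (a ^ 2 * (1 / (1 - b)))) :=
    (volterraAux_tendsto bj hsum b hb hb1).const_mul (a ^ 2)
  -- Cauchy sequence
  have hCauchy : CauchySeq f := by
    rw [Metric.cauchySeq_iff]
    intro δ hδ
    have hGc : CauchySeq G := hGtend.cauchySeq
    rw [Metric.cauchySeq_iff] at hGc
    obtain ⟨N₀, hN₀⟩ := hGc (δ ^ 2) (by positivity)
    refine ⟨N₀, fun m hm n hn => ?_⟩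
    have key : ∀ p q, N₀ ≤ p → N₀ ≤ q → q ≤ p → dist (f p) (f q) < δ := by
      intro p q hp hq hpq
      have h2 := hN₀ p hp q hq
      rw [Real.dist_eq] at h2
      have h3 : ‖f p - f q‖ ^ 2 < δ ^ 2 := by
        rw [hsub q p hpq]
        calc G p - G q ≤ |G p - G q| := le_abs_self _
          _ < δ ^ 2 := h2
      have h4 := lt_of_pow_lt_pow_left₀ 2 hδ.le h3
      rwa [dist_eq_norm]
    rcases le_total n m with h | h
    · exact key m n hm hn h
    · rw [dist_comm]; exact key n m hn hm h
  obtain ⟨gl, hgl⟩ := cauchySeq_tendsto_of_complete hCauchy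
  refine ⟨⇑gl, Lp.memLp gl, ?_, ?_⟩
  · -- convergence in eLpNorm
    have hnorm_tend : Filter.Tendsto (fun N => ‖f N - gl‖) Filter.atTop (nhds 0) := by
      rw [← tendsto_iff_norm_sub_tendsto_zero]
      exact hgl
    have heq : ∀ N, eLpNorm (fun ω => T N ω - (gl : Ω → ℝ) ω) 2 μ
        = ENNReal.ofReal ‖f N - gl‖ := by
      intro N
      have hae : (fun ω => T N ω - (gl : Ω → ℝ) ω) =ᵐ[μ] ⇑(f N - gl) := by
        filter_upwards [hfae N, Lp.coeFn_sub (f N) gl] with ω h1 h2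
        rw [h2, Pi.sub_apply, h1]
      rw [eLpNorm_congr_ae hae, Lp.norm_def,
        ENNReal.ofReal_toReal (Lp.eLpNorm_ne_top _)]
    simp only [heq]
    have := ENNReal.tendsto_ofReal hnorm_tend
    simpa using this
  · -- second moment
    have h1 : Filter.Tendsto (fun N => ‖f N‖ ^ 2) Filter.atTop (nhds (‖gl‖ ^ 2)) :=
      (hgl.norm).pow 2
    have h2 : Filter.Tendsto (fun N => ‖f N‖ ^ 2) Filter.atTop
        (nhds (a ^ 2 * (1 / (1 - b)))) := by
      have : (fun N => ‖f N‖ ^ 2) = G := funext hnormsq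
      rw [this]
      exact hGtend
    have hlim : ‖gl‖ ^ 2 = a ^ 2 * (1 / (1 - b)) := tendsto_nhds_unique h1 h2
    have hms : μ[fun ω => ((gl : Ω → ℝ) ω) ^ 2] = ‖gl‖ ^ 2 := by
      rw [← real_inner_self_eq_norm_sq, MeasureTheory.L2.inner_def]
      congr 1
      funext ω
      rw [RCLike.inner_apply, conj_trivial]
      ring
    rw [hms, hlim, mul_one_div]
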